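/- In the UMPLS instance constructed from a UFL instance, if there exists a feasible solution with cost K < Ω, then there exists a feasible solution with cost at most K in which w p l = 0 for every ordered pair (p, l) that is not of the form (facility plant, client plant); that is, all transfers occur only on facility→client arcs. -/

import Mathlib

open Finset

noncomputable section

/-- Plants of the UMPLS instance built from a UFL instance:
one plant per facility (`Sum.inl`) and one per client (`Sum.inr`). -/
abbrev Plant (NS NC : ℕ) := Fin NS ⊕ Fin NC

/-- Feasibility of a single-item single-period UMPLS solution. -/
def umplsFeasible {P : Type} [Fintype P] [DecidableEq P]
    (d : P → ℝ) (x s : P → ℝ) (w : P → P → ℝ) (y : P → ℝ) (Y : P → P → ℝ) : Prop :=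
  (∀ p, 0 ≤ x p) ∧ (∀ p, 0 ≤ s p) ∧ (∀ p l, 0 ≤ w p l) ∧
  (∀ p, w p p = 0) ∧
  (∀ p, x p + ∑ l ∈ univ.erase p, w l p = s p + ∑ l ∈ univ.erase p, w p l + d p) ∧
  (∀ p, y p = 0 ∨ y p = 1) ∧
  (∀ p l, Y p l = 0 ∨ Y p l = 1) ∧
  (∀ p, 0 < x p → y p = 1) ∧
  (∀ p l, 0 < w p l → Y p l = 1)

/-- Cost of a single-item single-period UMPLS solution. -/
def umplsCost {P : Type} [Fintype P] [DecidableEq P]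
    (c f h : P → ℝ) (r F : P → P → ℝ)
    (x s : P → ℝ) (w : P → P → ℝ) (y : P → ℝ) (Y : P → P → ℝ) : ℝ :=
  (∑ p, (c p * x p + f p * y p + h p * s p))
    + ∑ p, ∑ l ∈ univ.erase p, (r p l * w p l + F p l * Y p l)

/-- `Ω = (max_j q j + max_{l,j} v l j) * (NC + 1)`. -/
def Omega (NS NC : ℕ) (q : Fin NS → ℝ) (v : Fin NC → Fin NS → ℝ) : ℝ :=
  ((⨆ j, q j) + (⨆ l, ⨆ j, v l j)) * (NC + 1)

/-- Demands of the constructed UMPLS instance. -/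
def redD (NS NC : ℕ) : Plant NS NC → ℝ
  | Sum.inl _ => 0
  | Sum.inr _ => 1

/-- Setup costs of the constructed UMPLS instance. -/
def redF (NS NC : ℕ) (q : Fin NS → ℝ) (v : Fin NC → Fin NS → ℝ) : Plant NS NC → ℝ
  | Sum.inl j => q j
  | Sum.inr _ => Omega NS NC q v

/-- Unit production costs of the constructed UMPLS instance. -/
def redC (NS NC : ℕ) (q : Fin NS → ℝ) (v : Fin NC → Fin NS → ℝ) : Plant NS NC → ℝ
  | Sum.inl _ => 0
  | Sum.inr _ => Omega NS NC q v

/-- Holding costs of the constructed UMPLS instance. -/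
def redH (NS NC : ℕ) : Plant NS NC → ℝ := fun _ => 0

/-- Unit transfer costs of the constructed UMPLS instance:
`v l j` on facility→client arcs and `Ω` on every other ordered pair of distinct plants. -/
def redR (NS NC : ℕ) (q : Fin NS → ℝ) (v : Fin NC → Fin NS → ℝ) :
    Plant NS NC → Plant NS NC → ℝ
  | Sum.inl j, Sum.inr l => v l j
  | _, _ => Omega NS NC q v

/-- Fixed transfer costs of the constructed UMPLS instance (all zero). -/
def redFix (NS NC : ℕ) : Plant NS NC → Plant NS NC → ℝ := fun _ _ => 0

/-- Cost of a UFL solution given by the open set `S'` and the assignment `a`. -/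
def uflCost (NS NC : ℕ) (q : Fin NS → ℝ) (v : Fin NC → Fin NS → ℝ)
    (S' : Finset (Fin NS)) (a : Fin NC → Fin NS) : ℝ :=
  ∑ j ∈ S', q j + ∑ l, v l (a l)

/-- if the constructed UMPLS instance has a feasible solution of cost `K < Ω`,
then it has a feasible solution of cost at most `K` whose transfers occur only on
facility→client arcs. -/
theorem stmt_1 (NS NC : ℕ) (q : Fin NS → ℝ) (v : Fin NC → Fin NS → ℝ)
    (hq : ∀ j, 0 ≤ q j) (hv : ∀ l j, 0 ≤ v l j)
    (K : ℝ) (hK : K < Omega NS NC q v)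
    (hsol : ∃ (x s : Plant NS NC → ℝ) (w : Plant NS NC → Plant NS NC → ℝ)
        (y : Plant NS NC → ℝ) (Y : Plant NS NC → Plant NS NC → ℝ),
      umplsFeasible (redD NS NC) x s w y Y ∧
        umplsCost (redC NS NC q v) (redF NS NC q v) (redH NS NC)
          (redR NS NC q v) (redFix NS NC) x s w y Y = K) :
    ∃ (x s : Plant NS NC → ℝ) (w : Plant NS NC → Plant NS NC → ℝ)
        (y : Plant NS NC → ℝ) (Y : Plant NS NC → Plant NS NC → ℝ),
      umplsFeasible (redD NS NC) x s w y Y ∧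
      umplsCost (redC NS NC q v) (redF NS NC q v) (redH NS NC)
        (redR NS NC q v) (redFix NS NC) x s w y Y ≤ K ∧
      ∀ p l : Plant NS NC,
        (¬ ∃ (j : Fin NS) (c' : Fin NC), p = Sum.inl j ∧ l = Sum.inr c') → w p l = 0 := by
  
  classical
  obtain ⟨x, s, w, y, Y, ⟨hx0, hs0, hw0, hwd, hbal, hy01, hY01, hxy, hwY⟩, hcost⟩ := hsol
  set Ω : ℝ := Omega NS NC q v with hOm
  have hΩ0 : 0 ≤ Ω := by
    rw [hOm, Omega]
    have h1 : 0 ≤ ⨆ j, q j := Real.iSup_nonneg hq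
    have h2 : 0 ≤ ⨆ l, ⨆ j, v l j := Real.iSup_nonneg fun l => Real.iSup_nonneg (hv l)
    positivity
  have hy0 : ∀ p, 0 ≤ y p := fun p => by rcases hy01 p with h | h <;> rw [h] <;> norm_num
  have hY0 : ∀ p m, 0 ≤ Y p m := fun p m => by rcases hY01 p m with h | h <;> rw [h] <;> norm_num
  have hf0 : ∀ p, 0 ≤ redF NS NC q v p := by
    intro p; cases p with
    | inl j => exact hq j
    | inr l => exact hΩ0
  have hr0 : ∀ p m, 0 ≤ redR NS NC q v p m := by
    intro p m
    cases p with
    | inl j => cases m with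
      | inl j' => exact hΩ0
      | inr l => exact hv l j
    | inr l => cases m with
      | inl j' => exact hΩ0
      | inr l' => exact hΩ0
  -- abbreviations for flows
  set Bff : ℝ := ∑ j, ∑ j', w (Sum.inl j) (Sum.inl j') with hBff
  set Bcf : ℝ := ∑ l, ∑ j, w (Sum.inr l) (Sum.inl j) with hBcf
  set Bcc : ℝ := ∑ l, ∑ l', w (Sum.inr l) (Sum.inr l') with hBcc
  set B : ℝ := Bff + Bcf + Bcc with hB
  set good : ℝ := ∑ l, ∑ j, v l j * w (Sum.inl j) (Sum.inr l) with hgood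
  set qy : ℝ := ∑ j, q j * y (Sum.inl j) with hqy
  have hB0 : 0 ≤ B := by
    rw [hB, hBff, hBcf, hBcc]
    have n2 : ∀ (f : Plant NS NC → Plant NS NC → ℝ), True := fun _ => trivial
    refine add_nonneg (add_nonneg ?_ ?_) ?_ <;>
      exact Finset.sum_nonneg fun _ _ => Finset.sum_nonneg fun _ _ => hw0 _ _
  have hgood0 : 0 ≤ good := by
    rw [hgood]
    exact Finset.sum_nonneg fun _ _ => Finset.sum_nonneg fun _ _ =>
      mul_nonneg (hv _ _) (hw0 _ _)
  have hqy0 : 0 ≤ qy := by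
    rw [hqy]; exact Finset.sum_nonneg fun j _ => mul_nonneg (hq j) (hy0 _)
  -- the sum of each cost term over a second coordinate, with diagonal removed, is the full sum
  have herase : ∀ (g : Plant NS NC → ℝ) (p : Plant NS NC), g p = 0 →
      ∑ m ∈ univ.erase p, g m = ∑ m, g m := fun g p h => Finset.sum_erase _ h
  -- the client part of the production+setup cost
  set cy : ℝ := ∑ l, (Ω * x (Sum.inr l) + Ω * y (Sum.inr l)) with hcy
  have hcy0 : 0 ≤ cy := by
    rw [hcy]
    exact Finset.sum_nonneg fun l _ =>
      add_nonneg (mul_nonneg hΩ0 (hx0 _)) (mul_nonneg hΩ0 (hy0 _))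
  -- decompose the cost
  have hKdec : K = (qy + cy) + (good + Ω * B) := by
    rw [← hcost, umplsCost]
    have hA : (∑ p, (redC NS NC q v p * x p + redF NS NC q v p * y p + redH NS NC p * s p))
        = qy + cy := by
      rw [Fintype.sum_sum_type]
      congr 1
      · rw [hqy]
        refine Finset.sum_congr rfl fun j _ => ?_
        simp [redC, redF, redH]
      · rw [hcy]
        refine Finset.sum_congr rfl fun l _ => ?_
        simp [redC, redF, redH, hOm]
    have hT : (∑ p, ∑ m ∈ univ.erase p,
        (redR NS NC q v p m * w p m + redFix NS NC p m * Y p m)) = good + Ω * B := by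
      have step1 : ∀ p : Plant NS NC, (∑ m ∈ univ.erase p,
          (redR NS NC q v p m * w p m + redFix NS NC p m * Y p m))
          = ∑ m, redR NS NC q v p m * w p m := by
        intro p
        have : ∀ m, redR NS NC q v p m * w p m + redFix NS NC p m * Y p m
            = redR NS NC q v p m * w p m := by
          intro m; simp [redFix]
        rw [Finset.sum_congr rfl fun m _ => this m]
        exact herase _ p (by rw [hwd p, mul_zero])
      rw [Finset.sum_congr rfl fun p _ => step1 p, Fintype.sum_sum_type]
      have hL : ∀ j : Fin NS, (∑ m, redR NS NC q v (Sum.inl j) m * w (Sum.inl j) m)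
          = (∑ j', Ω * w (Sum.inl j) (Sum.inl j')) + ∑ l, v l j * w (Sum.inl j) (Sum.inr l) := by
        intro j
        rw [Fintype.sum_sum_type]
        congr 1
      have hR : ∀ l : Fin NC, (∑ m, redR NS NC q v (Sum.inr l) m * w (Sum.inr l) m)
          = (∑ j, Ω * w (Sum.inr l) (Sum.inl j)) + ∑ l', Ω * w (Sum.inr l) (Sum.inr l') := by
        intro l
        rw [Fintype.sum_sum_type]
        congr 1
      rw [Finset.sum_congr rfl fun j _ => hL j, Finset.sum_congr rfl fun l _ => hR l]
      rw [Finset.sum_add_distrib, Finset.sum_add_distrib]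
      have e1 : (∑ j, ∑ j', Ω * w (Sum.inl j) (Sum.inl j')) = Ω * Bff := by
        rw [hBff, Finset.mul_sum]
        exact Finset.sum_congr rfl fun j _ => by rw [Finset.mul_sum]
      have e2 : (∑ j, ∑ l, v l j * w (Sum.inl j) (Sum.inr l)) = good := by
        rw [hgood]; exact Finset.sum_comm
      have e3 : (∑ l, ∑ j, Ω * w (Sum.inr l) (Sum.inl j)) = Ω * Bcf := by
        rw [hBcf, Finset.mul_sum]
        exact Finset.sum_congr rfl fun l _ => by rw [Finset.mul_sum]
      have e4 : (∑ l, ∑ l', Ω * w (Sum.inr l) (Sum.inr l')) = Ω * Bcc := by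
        rw [hBcc, Finset.mul_sum]
        exact Finset.sum_congr rfl fun l _ => by rw [Finset.mul_sum]
      rw [e1, e2, e3, e4, hB]; ring
    rw [hA, hT]
  have hK0 : 0 ≤ K := by
    rw [hKdec]
    have := mul_nonneg hΩ0 hB0
    linarith
  have hΩpos : 0 < Ω := lt_of_le_of_lt hK0 hK
  have hB1 : B < 1 := by
    by_contra hcon
    push_neg at hcon
    have : Ω * 1 ≤ Ω * B := by
      exact mul_le_mul_of_nonneg_left hcon (le_of_lt hΩpos)
    rw [mul_one] at this
    nlinarith
  -- x vanishes at client plants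
  have hxr : ∀ l, x (Sum.inr l) = 0 := by
    intro l
    by_contra hcon
    have hxpos : 0 < x (Sum.inr l) := lt_of_le_of_ne (hx0 _) (Ne.symm hcon)
    have hy1 : y (Sum.inr l) = 1 := hxy _ hxpos
    have : Ω ≤ cy := by
      have h1 : Ω * x (Sum.inr l) + Ω * y (Sum.inr l) ≤ cy := by
        rw [hcy]
        exact Finset.single_le_sum (f := fun l => Ω * x (Sum.inr l) + Ω * y (Sum.inr l))
          (fun l _ => add_nonneg (mul_nonneg hΩ0 (hx0 _)) (mul_nonneg hΩ0 (hy0 _)))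
          (Finset.mem_univ l)
      rw [hy1, mul_one] at h1
      nlinarith [mul_nonneg hΩ0 (le_of_lt hxpos)]
    have : Ω ≤ K := by
      rw [hKdec]
      have := mul_nonneg hΩ0 hB0
      linarith
    linarith
  -- good inflow of each client, bad inflow to facilities
  set Gw : Fin NC → ℝ := fun l => ∑ j, w (Sum.inl j) (Sum.inr l) with hGw
  set Cin : Fin NC → ℝ := fun l => ∑ l', w (Sum.inr l') (Sum.inr l) with hCin
  set Og : Fin NS → ℝ := fun j => ∑ l, w (Sum.inl j) (Sum.inr l) with hOg
  set Binc : Fin NS → ℝ := fun j =>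
    (∑ j', w (Sum.inl j') (Sum.inl j)) + ∑ l, w (Sum.inr l) (Sum.inl j) with hBinc
  have hBinc0 : ∀ j, 0 ≤ Binc j := by
    intro j; rw [hBinc]
    exact add_nonneg (Finset.sum_nonneg fun _ _ => hw0 _ _)
      (Finset.sum_nonneg fun _ _ => hw0 _ _)
  have hOg0 : ∀ j, 0 ≤ Og j := fun j => Finset.sum_nonneg fun _ _ => hw0 _ _
  -- client balance : Gw l + Cin l ≥ 1
  have hclient : ∀ l, 1 ≤ Gw l + Cin l := by
    intro l
    have hb := hbal (Sum.inr l)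
    have hin : (∑ m ∈ univ.erase (Sum.inr l : Plant NS NC), w m (Sum.inr l))
        = Gw l + Cin l := by
      rw [herase (fun m => w m (Sum.inr l)) _ (hwd _), Fintype.sum_sum_type, hGw, hCin]
    have hout : 0 ≤ ∑ m ∈ univ.erase (Sum.inr l : Plant NS NC), w (Sum.inr l) m :=
      Finset.sum_nonneg fun _ _ => hw0 _ _
    rw [hin, hxr l, redD] at hb
    have := hs0 (Sum.inr l : Plant NS NC)
    linarith
  -- facility balance : Og j ≤ x j + Binc j
  have hfac : ∀ j, Og j ≤ x (Sum.inl j) + Binc j := by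
    intro j
    have hb := hbal (Sum.inl j)
    have hin : (∑ m ∈ univ.erase (Sum.inl j : Plant NS NC), w m (Sum.inl j)) = Binc j := by
      rw [herase (fun m => w m (Sum.inl j)) _ (hwd _), Fintype.sum_sum_type, hBinc]
    have hout : (∑ m ∈ univ.erase (Sum.inl j : Plant NS NC), w (Sum.inl j) m)
        = (∑ j', w (Sum.inl j) (Sum.inl j')) + Og j := by
      rw [herase (fun m => w (Sum.inl j) m) _ (hwd _), Fintype.sum_sum_type, hOg]
    rw [hin, hout, redD] at hb
    have h1 : 0 ≤ ∑ j', w (Sum.inl j) (Sum.inl j') := Finset.sum_nonneg fun _ _ => hw0 _ _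
    have := hs0 (Sum.inl j : Plant NS NC)
    linarith
  -- the scaling factors
  set lam : Fin NS → ℝ := fun j =>
    if Og j = 0 then 0 else min 1 (x (Sum.inl j) / Og j) with hlam
  have hlam0 : ∀ j, 0 ≤ lam j := by
    intro j; rw [hlam]
    dsimp only
    split
    · exact le_refl 0
    · rename_i h
      have hogpos : 0 < Og j := lt_of_le_of_ne (hOg0 j) (Ne.symm h)
      exact le_min (by norm_num) (div_nonneg (hx0 _) (le_of_lt hogpos))
  have hlam1 : ∀ j, lam j ≤ 1 := by
    intro j; rw [hlam]
    dsimp only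
    split
    · norm_num
    · exact min_le_left _ _
  have hlamx : ∀ j, lam j * Og j ≤ x (Sum.inl j) := by
    intro j; rw [hlam]
    dsimp only
    split
    · rename_i h; rw [h, mul_zero]; exact hx0 _
    · rename_i h
      have hogpos : 0 < Og j := lt_of_le_of_ne (hOg0 j) (Ne.symm h)
      calc min 1 (x (Sum.inl j) / Og j) * Og j
          ≤ (x (Sum.inl j) / Og j) * Og j :=
            mul_le_mul_of_nonneg_right (min_le_right _ _) (le_of_lt hogpos)
        _ = x (Sum.inl j) := div_mul_cancel₀ _ h
  have hlamxpos : ∀ j, 0 < lam j → 0 < x (Sum.inl j) := by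
    intro j hpos
    rw [hlam] at hpos
    dsimp only at hpos
    by_contra hcon
    push_neg at hcon
    have hx00 : x (Sum.inl j) = 0 := le_antisymm hcon (hx0 _)
    rcases eq_or_ne (Og j) 0 with h | h
    · rw [if_pos h] at hpos; exact lt_irrefl 0 hpos
    · rw [if_neg h] at hpos
      have := lt_min_iff.mp hpos
      have hogpos : 0 < Og j := lt_of_le_of_ne (hOg0 j) (Ne.symm h)
      rw [hx00, zero_div] at this
      exact lt_irrefl 0 this.2
  have hdelta : ∀ j, (1 - lam j) * Og j ≤ Binc j := by
    intro j
    rcases eq_or_ne (Og j) 0 with h | h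
    · rw [h, mul_zero]; exact hBinc0 j
    · have hogpos : 0 < Og j := lt_of_le_of_ne (hOg0 j) (Ne.symm h)
      have hmin : lam j * Og j = min (Og j) (x (Sum.inl j)) := by
        rw [hlam]
        dsimp only
        rw [if_neg h]
        rw [min_mul_of_nonneg _ _ (le_of_lt hogpos), one_mul, div_mul_cancel₀ _ h]
      have : Og j - Binc j ≤ min (Og j) (x (Sum.inl j)) := by
        refine le_min ?_ ?_
        · linarith [hBinc0 j]
        · linarith [hfac j]
      rw [sub_mul, one_mul, hmin]
      linarith
  -- the rerouted flows
  set u : Fin NS → Fin NC → ℝ := fun j l => lam j * w (Sum.inl j) (Sum.inr l) with hu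
  set G : Fin NC → ℝ := fun l => ∑ j, u j l with hG
  have hu0 : ∀ j l, 0 ≤ u j l := fun j l => mul_nonneg (hlam0 j) (hw0 _ _)
  have huw : ∀ j l, u j l ≤ w (Sum.inl j) (Sum.inr l) := by
    intro j l
    rw [hu]
    dsimp only
    nlinarith [hlam1 j, hw0 (Sum.inl j : Plant NS NC) (Sum.inr l), hlam0 j]
  have hGlb : ∀ l, 1 - B ≤ G l := by
    intro l
    have h1 : Gw l - G l ≤ Bff + Bcf := by
      have h2 : ∀ j, w (Sum.inl j) (Sum.inr l) - u j l ≤ Binc j := by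
        intro j
        have h3 : w (Sum.inl j) (Sum.inr l) ≤ Og j :=
          Finset.single_le_sum (f := fun l' => w (Sum.inl j) (Sum.inr l'))
            (fun _ _ => hw0 _ _) (Finset.mem_univ l)
        have h4 : w (Sum.inl j) (Sum.inr l) - u j l
            = (1 - lam j) * w (Sum.inl j) (Sum.inr l) := by rw [hu]; ring
        have h5 : (1 - lam j) * w (Sum.inl j) (Sum.inr l) ≤ (1 - lam j) * Og j :=
          mul_le_mul_of_nonneg_left h3 (by linarith [hlam1 j])
        calc w (Sum.inl j) (Sum.inr l) - u j l ≤ (1 - lam j) * Og j := by rw [h4]; exact h5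
          _ ≤ Binc j := hdelta j
      have h6 : Gw l - G l = ∑ j, (w (Sum.inl j) (Sum.inr l) - u j l) := by
        rw [hGw, hG, Finset.sum_sub_distrib]
      have h7 : (∑ j, Binc j) = Bff + Bcf := by
        rw [hBinc, hBff, hBcf, Finset.sum_add_distrib]
        congr 1
        · exact Finset.sum_comm
        · exact Finset.sum_comm
      rw [h6, ← h7]
      exact Finset.sum_le_sum fun j _ => h2 j
    have h8 : Cin l ≤ Bcc := by
      rw [hCin, hBcc]
      refine Finset.sum_le_sum fun l' _ => ?_
      exact Finset.single_le_sum (f := fun l'' => w (Sum.inr l') (Sum.inr l''))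
        (fun _ _ => hw0 _ _) (Finset.mem_univ l)
    have := hclient l
    rw [hB]
    linarith
  have hGpos : ∀ l, 0 < G l := fun l => lt_of_lt_of_le (by linarith) (hGlb l)
  -- the new solution
  set w' : Plant NS NC → Plant NS NC → ℝ := fun p m =>
    match p, m with
    | Sum.inl j, Sum.inr l => u j l / G l
    | _, _ => 0 with hw'
  set x' : Plant NS NC → ℝ := fun p =>
    match p with
    | Sum.inl j => ∑ l, u j l / G l
    | Sum.inr _ => 0 with hx'
  set y' : Plant NS NC → ℝ := fun p =>
    match p with
    | Sum.inl j => y (Sum.inl j)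
    | Sum.inr _ => 0 with hy'
  have hw'g : ∀ j l, w' (Sum.inl j) (Sum.inr l) = u j l / G l := fun _ _ => rfl
  have hw'toL : ∀ (p : Plant NS NC) (j : Fin NS), w' p (Sum.inl j) = 0 := by
    intro p j; cases p <;> rfl
  have hw'fromR : ∀ (l : Fin NC) (m : Plant NS NC), w' (Sum.inr l) m = 0 := by
    intro l m; cases m <;> rfl
  have hw'0 : ∀ p m, 0 ≤ w' p m := by
    intro p m
    cases p with
    | inl j => cases m with
      | inl j' => exact (hw'toL (Sum.inl j) j').ge
      | inr l => rw [hw'g j l]; exact div_nonneg (hu0 j l) (le_of_lt (hGpos l))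
    | inr l => exact (hw'fromR l m).ge
  refine ⟨x', fun _ => 0, w', y', Y, ⟨?_, ?_, ?_, ?_, ?_, ?_, ?_, ?_, ?_⟩, ?_, ?_⟩
  · -- x' nonneg
    intro p
    cases p with
    | inl j => exact Finset.sum_nonneg fun l _ => div_nonneg (hu0 j l) (le_of_lt (hGpos l))
    | inr l => exact le_refl 0
  · intro p; exact le_refl 0
  · exact hw'0
  · -- diagonal
    intro p; cases p with
    | inl j => exact hw'toL (Sum.inl j) j
    | inr l => exact hw'fromR l (Sum.inr l)
  · -- balance
    intro p
    cases p with
    | inl j =>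
      have hin : (∑ m ∈ univ.erase (Sum.inl j : Plant NS NC), w' m (Sum.inl j)) = 0 :=
        Finset.sum_eq_zero fun m _ => hw'toL m j
      have hout : (∑ m ∈ univ.erase (Sum.inl j : Plant NS NC), w' (Sum.inl j) m)
          = ∑ l, u j l / G l := by
        rw [herase (fun m => w' (Sum.inl j) m) (Sum.inl j) (hw'toL (Sum.inl j) j), Fintype.sum_sum_type]
        have : (∑ j', w' (Sum.inl j) (Sum.inl j')) = 0 :=
          Finset.sum_eq_zero fun j' _ => hw'toL (Sum.inl j) j'
        rw [this, zero_add]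
      rw [hin, hout, redD]
      show x' (Sum.inl j) + 0 = 0 + (∑ l, u j l / G l) + 0
      rw [hx']
      ring
    | inr l =>
      have hin : (∑ m ∈ univ.erase (Sum.inr l : Plant NS NC), w' m (Sum.inr l)) = 1 := by
        rw [herase (fun m => w' m (Sum.inr l)) (Sum.inr l) (hw'fromR l (Sum.inr l)), Fintype.sum_sum_type]
        have h1 : (∑ l', w' (Sum.inr l') (Sum.inr l)) = 0 :=
          Finset.sum_eq_zero fun l' _ => hw'fromR l' (Sum.inr l)
        have h2 : (∑ j, w' (Sum.inl j) (Sum.inr l)) = ∑ j, u j l / G l :=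
          Finset.sum_congr rfl fun j _ => hw'g j l
        rw [h1, h2, add_zero, ← Finset.sum_div]
        rw [show (∑ j, u j l) = G l from rfl]
        exact div_self (ne_of_gt (hGpos l))
      have hout : (∑ m ∈ univ.erase (Sum.inr l : Plant NS NC), w' (Sum.inr l) m) = 0 :=
        Finset.sum_eq_zero fun m _ => hw'fromR l m
      rw [hin, hout, redD]
      show x' (Sum.inr l) + 1 = 0 + 0 + 1
      rw [hx']
      ring
  · -- y' in {0,1}
    intro p
    cases p with
    | inl j => exact hy01 (Sum.inl j)
    | inr l => exact Or.inl rfl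
  · exact hY01
  · -- x' > 0 implies y' = 1
    intro p hp
    cases p with
    | inl j =>
      have : ∃ l ∈ (univ : Finset (Fin NC)), 0 < u j l / G l := by
        by_contra hcon
        push_neg at hcon
        have : (∑ l, u j l / G l) ≤ 0 :=
          Finset.sum_nonpos fun l hl => hcon l hl
        have hpx : x' (Sum.inl j) = ∑ l, u j l / G l := rfl
        rw [hpx] at hp
        linarith
      obtain ⟨l, _, hl⟩ := this
      have hupos : 0 < u j l := by
        by_contra hcon
        push_neg at hcon
        have : u j l = 0 := le_antisymm hcon (hu0 j l)
        rw [this, zero_div] at hl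
        exact lt_irrefl 0 hl
      have hlampos : 0 < lam j := by
        rcases lt_or_ge 0 (lam j) with h | h
        · exact h
        · exfalso
          have : lam j = 0 := le_antisymm h (hlam0 j)
          rw [hu] at hupos
          dsimp only at hupos
          rw [this, zero_mul] at hupos
          exact lt_irrefl 0 hupos
      exact hxy _ (hlamxpos j hlampos)
    | inr l =>
      exfalso
      have : x' (Sum.inr l) = 0 := rfl
      rw [this] at hp
      exact lt_irrefl 0 hp
  · -- w' > 0 implies Y = 1
    intro p m hpm
    cases p with
    | inl j => cases m with
      | inl j' => rw [hw'toL (Sum.inl j) j'] at hpm; exact absurd hpm (lt_irrefl 0)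
      | inr l =>
        rw [hw'g j l] at hpm
        have hupos : 0 < u j l := by
          by_contra hcon
          push_neg at hcon
          have : u j l = 0 := le_antisymm hcon (hu0 j l)
          rw [this, zero_div] at hpm
          exact lt_irrefl 0 hpm
        have hwpos : 0 < w (Sum.inl j) (Sum.inr l) := by
          by_contra hcon
          push_neg at hcon
          have : w (Sum.inl j) (Sum.inr l) = 0 := le_antisymm hcon (hw0 _ _)
          rw [hu] at hupos
          dsimp only at hupos
          rw [this, mul_zero] at hupos
          exact lt_irrefl 0 hupos
        exact hwY _ _ hwpos
    | inr l => rw [hw'fromR l m] at hpm; exact absurd hpm (lt_irrefl 0)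
  · -- cost bound
    have hcost' : umplsCost (redC NS NC q v) (redF NS NC q v) (redH NS NC)
        (redR NS NC q v) (redFix NS NC) x' (fun _ => 0) w' y' Y
        = qy + ∑ l, (∑ j, v l j * u j l) / G l := by
      rw [umplsCost]
      have hA : (∑ p, (redC NS NC q v p * x' p + redF NS NC q v p * y' p
          + redH NS NC p * (0:ℝ))) = qy := by
        rw [Fintype.sum_sum_type]
        have h1 : (∑ j, (redC NS NC q v (Sum.inl j) * x' (Sum.inl j)
            + redF NS NC q v (Sum.inl j) * y' (Sum.inl j)
            + redH NS NC (Sum.inl j) * (0:ℝ))) = qy := by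
          rw [hqy]
          refine Finset.sum_congr rfl fun j _ => ?_
          have : y' (Sum.inl j) = y (Sum.inl j) := rfl
          simp [redC, redF, redH, this]
        have h2 : (∑ l, (redC NS NC q v (Sum.inr l) * x' (Sum.inr l)
            + redF NS NC q v (Sum.inr l) * y' (Sum.inr l)
            + redH NS NC (Sum.inr l) * (0:ℝ))) = 0 := by
          refine Finset.sum_eq_zero fun l _ => ?_
          have e1 : x' (Sum.inr l) = 0 := rfl
          have e2 : y' (Sum.inr l) = 0 := rfl
          simp [redH, e1, e2]
        rw [h1, h2, add_zero]
      have hT : (∑ p, ∑ m ∈ univ.erase p,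
          (redR NS NC q v p m * w' p m + redFix NS NC p m * Y p m))
          = ∑ l, (∑ j, v l j * u j l) / G l := by
        have step1 : ∀ p : Plant NS NC, (∑ m ∈ univ.erase p,
            (redR NS NC q v p m * w' p m + redFix NS NC p m * Y p m))
            = ∑ m, redR NS NC q v p m * w' p m := by
          intro p
          have hmm : ∀ m, redR NS NC q v p m * w' p m + redFix NS NC p m * Y p m
              = redR NS NC q v p m * w' p m := by intro m; simp [redFix]
          rw [Finset.sum_congr rfl fun m _ => hmm m]
          refine herase (fun m => redR NS NC q v p m * w' p m) p ?_
          cases p with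
          | inl j =>
            show redR NS NC q v (Sum.inl j) (Sum.inl j) * w' (Sum.inl j) (Sum.inl j) = 0
            rw [hw'toL (Sum.inl j) j, mul_zero]
          | inr l =>
            show redR NS NC q v (Sum.inr l) (Sum.inr l) * w' (Sum.inr l) (Sum.inr l) = 0
            rw [hw'fromR l (Sum.inr l), mul_zero]
        rw [Finset.sum_congr rfl fun p _ => step1 p, Fintype.sum_sum_type]
        have hR : (∑ l, ∑ m, redR NS NC q v (Sum.inr l) m * w' (Sum.inr l) m) = 0 :=
          Finset.sum_eq_zero fun l _ => Finset.sum_eq_zero fun m _ => by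
            rw [hw'fromR l m, mul_zero]
        have hL : (∑ j, ∑ m, redR NS NC q v (Sum.inl j) m * w' (Sum.inl j) m)
            = ∑ l, (∑ j, v l j * u j l) / G l := by
          have h3 : ∀ j : Fin NS, (∑ m, redR NS NC q v (Sum.inl j) m * w' (Sum.inl j) m)
              = ∑ l, v l j * (u j l / G l) := by
            intro j
            rw [Fintype.sum_sum_type]
            have h4 : (∑ j', redR NS NC q v (Sum.inl j) (Sum.inl j')
                * w' (Sum.inl j) (Sum.inl j')) = 0 :=
              Finset.sum_eq_zero fun j' _ => by rw [hw'toL (Sum.inl j) j', mul_zero]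
            have h5 : (∑ l, redR NS NC q v (Sum.inl j) (Sum.inr l)
                * w' (Sum.inl j) (Sum.inr l)) = ∑ l, v l j * (u j l / G l) :=
              Finset.sum_congr rfl fun l _ => by rw [hw'g j l]; rfl
            rw [h4, h5, zero_add]
          rw [Finset.sum_congr rfl fun j _ => h3 j, Finset.sum_comm]
          refine Finset.sum_congr rfl fun l _ => ?_
          rw [Finset.sum_div]
          exact Finset.sum_congr rfl fun j _ => (mul_div_assoc (v l j) (u j l) (G l)).symm
        rw [hR, hL, add_zero]
      rw [hA, hT]
    rw [hcost']
    have hperl : ∀ l, (∑ j, v l j * u j l) / G l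
        ≤ (∑ j, v l j * w (Sum.inl j) (Sum.inr l)) / (1 - B) := by
      intro l
      have hnum0 : 0 ≤ ∑ j, v l j * u j l :=
        Finset.sum_nonneg fun j _ => mul_nonneg (hv l j) (hu0 j l)
      have hstep1 : (∑ j, v l j * u j l) / G l ≤ (∑ j, v l j * u j l) / (1 - B) :=
        div_le_div_of_nonneg_left hnum0 (by linarith) (hGlb l)
      have hstep2 : (∑ j, v l j * u j l) / (1 - B)
          ≤ (∑ j, v l j * w (Sum.inl j) (Sum.inr l)) / (1 - B) := by
        have hnum : (∑ j, v l j * u j l) ≤ ∑ j, v l j * w (Sum.inl j) (Sum.inr l) :=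
          Finset.sum_le_sum fun j _ => mul_le_mul_of_nonneg_left (huw j l) (hv l j)
        exact (div_le_div_iff_of_pos_right (by linarith : (0:ℝ) < 1 - B)).mpr hnum
      linarith
    have hsumle : (∑ l, (∑ j, v l j * u j l) / G l) ≤ good / (1 - B) := by
      calc (∑ l, (∑ j, v l j * u j l) / G l)
          ≤ ∑ l, (∑ j, v l j * w (Sum.inl j) (Sum.inr l)) / (1 - B) :=
            Finset.sum_le_sum fun l _ => hperl l
        _ = good / (1 - B) := by rw [hgood, Finset.sum_div]
    have hgoodle : good ≤ Ω * (1 - B) := by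
      have h1 : good + Ω * B ≤ K := by rw [hKdec]; linarith
      have h2 : Ω * (1 - B) = Ω - Ω * B := by ring
      linarith
    have hfrac : good / (1 - B) ≤ good + Ω * B := by
      rw [div_le_iff₀ (by linarith : (0:ℝ) < 1 - B)]
      nlinarith [mul_le_mul_of_nonneg_right hgoodle hB0]
    have hfin : qy + (good + Ω * B) ≤ K := by rw [hKdec]; linarith
    calc qy + ∑ l, (∑ j, v l j * u j l) / G l
        ≤ qy + good / (1 - B) := (add_le_add_iff_left qy).mpr hsumle
      _ ≤ qy + (good + Ω * B) := (add_le_add_iff_left qy).mpr hfrac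
      _ ≤ K := hfin
  · -- all transfers on facility→client arcs
    intro p m hpm
    cases p with
    | inl j => cases m with
      | inl j' => exact hw'toL (Sum.inl j) j'
      | inr l => exact absurd ⟨j, l, rfl, rfl⟩ hpm
    | inr l => exact hw'fromR l m
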